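/- If x ∉ Crit (i.e. |cos x| > 1/√N) then |Ω(x)| = |2 + N cos x| > √N − 2, and for any unit vector X with angle θ from s(x) = (1, Ω(x)), ‖M(x)X‖ ≥ √N|sin θ| − 2. -/
import Mathlib


/-- If `x ∉ Crit` (i.e. `|cos x| > 1/√N`, with `N > 4`) then
`|Ω(x)| = |2 + N cos x| > √N − 2`, and for any unit vector `X` at angle `θ` from
`s(x) = (1, Ω(x))`, given the lower bound `‖M(x)X‖ ≥ |sin θ|√(1+Ω(x)²)`, one has
`‖M(x)X‖ ≥ √N|sin θ| − 2`. -/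
theorem stmt16 (N x θ : ℝ) (hN : 4 < N)
    (hx : 1 / Real.sqrt N < |Real.cos x|)
    (Ω : ℝ) (hΩ : Ω = 2 + N * Real.cos x)
    (nMX : ℝ) (hlow : |Real.sin θ| * Real.sqrt (1 + Ω ^ 2) ≤ nMX) :
    Real.sqrt N - 2 < |Ω| ∧ Real.sqrt N * |Real.sin θ| - 2 ≤ nMX := by
  have hNpos : (0:ℝ) < N := by linarith
  have hs : 0 < Real.sqrt N := Real.sqrt_pos.mpr hNpos
  have hsq : Real.sqrt N * Real.sqrt N = N := Real.mul_self_sqrt hNpos.le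
  -- N * |cos x| > √N
  have h1 : Real.sqrt N < N * |Real.cos x| := by
    have h := (div_lt_iff₀ hs).mp hx
    nlinarith
  have hΩabs : Real.sqrt N - 2 < |Ω| := by
    have h2 : N * |Real.cos x| - 2 ≤ |Ω| := by
      have : |N * Real.cos x| - |(-2 : ℝ)| ≤ |N * Real.cos x - -2| :=
        abs_sub_abs_le_abs_sub _ _
      simp [abs_mul, abs_of_pos hNpos] at this
      calc N * |Real.cos x| - 2 ≤ |N * Real.cos x + 2| := by linarith
        _ = |Ω| := by rw [hΩ]; ring_nf
    linarith
  refine ⟨hΩabs, ?_⟩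
  have hΩle : |Ω| ≤ Real.sqrt (1 + Ω ^ 2) := by
    rw [← Real.sqrt_sq_eq_abs]
    exact Real.sqrt_le_sqrt (by linarith)
  have hsin : |Real.sin θ| ≤ 1 := Real.abs_sin_le_one θ
  have hsinn : 0 ≤ |Real.sin θ| := abs_nonneg _
  have key : Real.sqrt N * |Real.sin θ| - 2 ≤ |Real.sin θ| * Real.sqrt (1 + Ω ^ 2) := by
    have : (Real.sqrt N - 2) * |Real.sin θ| ≤ |Real.sin θ| * Real.sqrt (1 + Ω ^ 2) := by
      rw [mul_comm]
      exact mul_le_mul_of_nonneg_left (le_trans hΩabs.le hΩle) hsinn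
    nlinarith
  linarith
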